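/- Fix integers p ≥ 1 and r_1,…,r_p ≥ 1, facets F_1,…,F_m ⊆ {1,…,p}, and a constant M > 1. Let ψ : 𝒳 → ℝ satisfy M⁻¹ ≤ ψ_x ≤ M for all x, and let Θ* ∈ Ω satisfy ∏_{k=1}^m θ*^(k)(x|_{F_k}) = ψ_x for all x ∈ 𝒳. With uniform weights, define R(Θ) = (1/|𝒳|)·Σ_{x∈𝒳}(−ψ_x·log(∏_k θ^(k)(x|_{F_k})) + ∏_k θ^(k)(x|_{F_k})). Then for every Θ ∈ Ω: (1/|𝒳|)·Σ_{x∈𝒳}(ψ_x − ∏_{k=1}^m θ^(k)(x|_{F_k}))² ≤ 2M³·(R(Θ) − R(Θ*)), where |𝒳| = ∏_{i=1}^p r_i. -/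

import Mathlib

open Real

/-- For `0 < x ≤ 1`, `log x ≤ x - 1 - (x-1)^2/2`. -/
lemma logA_aux {x : ℝ} (hx : 0 < x) (hx1 : x ≤ 1) :
    Real.log x ≤ x - 1 - (x - 1) ^ 2 / 2 := by
  set f : ℝ → ℝ := fun y => y - 1 - (y - 1) ^ 2 / 2 - Real.log y with hf
  have hder : ∀ y : ℝ, 0 < y → HasDerivAt f (1 - (y - 1) - y⁻¹) y := by
    intro y hy0
    have h2 : HasDerivAt (fun y : ℝ => (y - 1) ^ 2 / 2) (y - 1) y := by
      have := (((hasDerivAt_id y).sub_const 1).pow 2).div_const 2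
      refine this.congr_deriv ?_
      simp [id]
    have h1 : HasDerivAt (fun y : ℝ => y - 1 - (y - 1) ^ 2 / 2) (1 - (y - 1)) y :=
      ((hasDerivAt_id y).sub_const 1).sub h2
    exact h1.sub (Real.hasDerivAt_log hy0.ne')
  have key : AntitoneOn f (Set.Ioc (0:ℝ) 1) := by
    apply antitoneOn_of_deriv_nonpos (convex_Ioc 0 1)
    · apply ContinuousOn.sub
      · fun_prop
      · exact Real.continuousOn_log.mono (fun y hy => ne_of_gt hy.1)
    · intro y hy
      rw [interior_Ioc] at hy
      exact (hder y hy.1).differentiableAt.differentiableWithinAt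
    · intro y hy
      rw [interior_Ioc] at hy
      have hy0 : (0:ℝ) < y := hy.1
      rw [(hder y hy0).deriv]
      have : 1 - (y - 1) - y⁻¹ = -((y - 1) ^ 2 / y) := by
        field_simp; ring
      rw [this]
      exact neg_nonpos.mpr (by positivity)
  have h1 : f 1 ≤ f x := key ⟨hx, hx1⟩ (Set.mem_Ioc.mpr ⟨one_pos, le_refl 1⟩) hx1
  simp only [hf, Real.log_one] at h1
  norm_num at h1
  linarith

/-- For `1 ≤ x`, `log x ≤ (x - x⁻¹)/2`. -/
lemma logB_aux {x : ℝ} (hx1 : 1 ≤ x) : Real.log x ≤ (x - x⁻¹) / 2 := by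
  have hx0 : (0:ℝ) < x := lt_of_lt_of_le one_pos hx1
  have h := Real.self_le_sinh_iff.mpr (Real.log_nonneg hx1)
  rwa [Real.sinh_log hx0] at h

/-- Pointwise key inequality: the squared error is bounded by `2 M³` times the
pointwise excess of the objective. -/
lemma keyineq_aux {M a b : ℝ} (hM : 1 < M) (ha1 : M⁻¹ ≤ a) (ha2 : a ≤ M)
    (hb1 : M⁻¹ ≤ b) (hb2 : b ≤ M) :
    (a - b) ^ 2 ≤ 2 * M ^ 3 * ((-a * Real.log b + b) - (-a * Real.log a + a)) := by
  have hM0 : (0:ℝ) < M := lt_trans one_pos hM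
  have hMi : (0:ℝ) < M⁻¹ := inv_pos.mpr hM0
  have ha : (0:ℝ) < a := lt_of_lt_of_le hMi ha1
  have hb : (0:ℝ) < b := lt_of_lt_of_le hMi hb1
  set x := b / a with hxdef
  have hx : (0:ℝ) < x := div_pos hb ha
  have hbx : b = a * x := by rw [hxdef]; field_simp
  have hlog : Real.log b - Real.log a = Real.log x := (Real.log_div hb.ne' ha.ne').symm
  have hrw : (-a * Real.log b + b) - (-a * Real.log a + a) = a * (x - 1 - Real.log x) := by
    have : Real.log b = Real.log a + Real.log x := by linarith
    rw [this, hbx]; ring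
  rw [hrw]
  have hM3 : M ≤ M ^ 3 := le_self_pow₀ hM.le (by norm_num)
  have haM3 : a ≤ M ^ 3 := le_trans ha2 hM3
  have hab2 : (a - b) ^ 2 = a ^ 2 * (x - 1) ^ 2 := by rw [hbx]; ring
  rcases le_or_gt x 1 with hx1 | hx1
  · have hA := logA_aux hx hx1
    have h0 : (x - 1) ^ 2 / 2 ≤ x - 1 - Real.log x := by linarith
    have hs : 0 ≤ x - 1 - Real.log x := le_trans (by positivity) h0
    rw [hab2]
    have h1 : a * (x - 1) ^ 2 ≤ a * (2 * (x - 1 - Real.log x)) :=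
      mul_le_mul_of_nonneg_left (by linarith) ha.le
    nlinarith [mul_le_mul_of_nonneg_left h1 ha.le,
      mul_le_mul_of_nonneg_right haM3 (mul_nonneg ha.le hs)]
  · have hB := logB_aux hx1.le
    have hxi : x * x⁻¹ = 1 := mul_inv_cancel₀ hx.ne'
    have h0 : (x - 1) ^ 2 ≤ 2 * x * (x - 1 - Real.log x) := by nlinarith
    have hs : 0 ≤ x - 1 - Real.log x := by nlinarith [sq_nonneg (x - 1)]
    rw [hab2]
    have hbM3 : b ≤ M ^ 3 := le_trans hb2 hM3
    have h1 : a ^ 2 * (x - 1) ^ 2 ≤ a ^ 2 * (2 * x * (x - 1 - Real.log x)) :=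
      mul_le_mul_of_nonneg_left h0 (sq_nonneg a)
    have h2 : a ^ 2 * (2 * x * (x - 1 - Real.log x)) = 2 * (a * b) * (x - 1 - Real.log x) := by
      rw [hbx]; ring
    have h3 : 2 * (a * b) * (x - 1 - Real.log x) ≤ 2 * (a * M ^ 3) * (x - 1 - Real.log x) := by
      have : a * b ≤ a * M ^ 3 := mul_le_mul_of_nonneg_left hbM3 ha.le
      nlinarith
    nlinarith

/-- Deterministic content of the paper's Theorem 3.9 (equation (approx_error)): with uniform
weights, the average squared approximation error of any feasible decomposition `Θ ∈ Ω`
against a correctly decomposable bounded positive tensor `ψ` is at most `2M³` times its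
excess risk relative to an exact decomposition `Θ*`. -/
theorem average_squared_error_le_excess_risk {p m : ℕ} (hp : 1 ≤ p)
    (r : Fin p → ℕ) (hr : ∀ i, 1 ≤ r i)
    (F : Fin m → Finset (Fin p)) (M : ℝ) (hM : 1 < M)
    (ψ : (∀ i, Fin (r i)) → ℝ) (hψ : ∀ x, M⁻¹ ≤ ψ x ∧ ψ x ≤ M)
    (Ω : Set (∀ k : Fin m, ((i : {i : Fin p // i ∈ F k}) → Fin (r i.1)) → ℝ))
    (hΩ : ∀ Θ, Θ ∈ Ω ↔
      ((∀ x : ∀ i, Fin (r i),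
          M⁻¹ ≤ ∏ k, Θ k (fun i => x i.1) ∧ ∏ k, Θ k (fun i => x i.1) ≤ M) ∧
        (∀ (k : Fin m) (ξ : (i : {i : Fin p // i ∈ F k}) → Fin (r i.1)),
          (M ^ 2)⁻¹ ≤ Θ k ξ ∧ Θ k ξ ≤ M ^ 2)))
    (Θstar : ∀ k : Fin m, ((i : {i : Fin p // i ∈ F k}) → Fin (r i.1)) → ℝ)
    (hΘstar : Θstar ∈ Ω)
    (hcorrect : ∀ x : ∀ i, Fin (r i), ∏ k, Θstar k (fun i => x i.1) = ψ x) :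
    ∀ Θ ∈ Ω,
      (1 / ∏ i, (r i : ℝ)) *
          ∑ x : ∀ i, Fin (r i), (ψ x - ∏ k, Θ k (fun i => x i.1)) ^ 2 ≤
        2 * M ^ 3 *
          ((1 / ∏ i, (r i : ℝ)) *
              ∑ x : ∀ i, Fin (r i),
                (-ψ x * Real.log (∏ k, Θ k (fun i => x i.1)) +
                  ∏ k, Θ k (fun i => x i.1)) -
            (1 / ∏ i, (r i : ℝ)) *
              ∑ x : ∀ i, Fin (r i),
                (-ψ x * Real.log (∏ k, Θstar k (fun i => x i.1)) +
                  ∏ k, Θstar k (fun i => x i.1))) := by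
  intro Θ hΘ
  have hΘb := ((hΩ Θ).mp hΘ).1
  have hN : (0:ℝ) < ∏ i, (r i : ℝ) := by
    apply Finset.prod_pos
    intro i _
    exact_mod_cast Nat.lt_of_lt_of_le Nat.zero_lt_one (hr i)
  have hsum : ∑ x : ∀ i, Fin (r i), (ψ x - ∏ k, Θ k (fun i => x i.1)) ^ 2 ≤
      ∑ x : ∀ i, Fin (r i),
        2 * M ^ 3 *
          ((-ψ x * Real.log (∏ k, Θ k (fun i => x i.1)) + ∏ k, Θ k (fun i => x i.1)) -
            (-ψ x * Real.log (∏ k, Θstar k (fun i => x i.1)) +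
              ∏ k, Θstar k (fun i => x i.1))) := by
    apply Finset.sum_le_sum
    intro x _
    rw [hcorrect x]
    exact keyineq_aux hM (hψ x).1 (hψ x).2 (hΘb x).1 (hΘb x).2
  have hsplit : ∑ x : ∀ i, Fin (r i),
        2 * M ^ 3 *
          ((-ψ x * Real.log (∏ k, Θ k (fun i => x i.1)) + ∏ k, Θ k (fun i => x i.1)) -
            (-ψ x * Real.log (∏ k, Θstar k (fun i => x i.1)) +
              ∏ k, Θstar k (fun i => x i.1))) =
      2 * M ^ 3 *
        ((∑ x : ∀ i, Fin (r i),
            (-ψ x * Real.log (∏ k, Θ k (fun i => x i.1)) + ∏ k, Θ k (fun i => x i.1))) -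
          ∑ x : ∀ i, Fin (r i),
            (-ψ x * Real.log (∏ k, Θstar k (fun i => x i.1)) +
              ∏ k, Θstar k (fun i => x i.1))) := by
    rw [← Finset.mul_sum, Finset.sum_sub_distrib]
  have hmul := mul_le_mul_of_nonneg_left (hsum.trans_eq hsplit)
    (le_of_lt (by positivity : (0:ℝ) < 1 / ∏ i, (r i : ℝ)))
  calc (1 / ∏ i, (r i : ℝ)) *
          ∑ x : ∀ i, Fin (r i), (ψ x - ∏ k, Θ k (fun i => x i.1)) ^ 2
      ≤ (1 / ∏ i, (r i : ℝ)) *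
          (2 * M ^ 3 *
            ((∑ x : ∀ i, Fin (r i),
                (-ψ x * Real.log (∏ k, Θ k (fun i => x i.1)) +
                  ∏ k, Θ k (fun i => x i.1))) -
              ∑ x : ∀ i, Fin (r i),
                (-ψ x * Real.log (∏ k, Θstar k (fun i => x i.1)) +
                  ∏ k, Θstar k (fun i => x i.1)))) := hmul
    _ = 2 * M ^ 3 *
          ((1 / ∏ i, (r i : ℝ)) *
              ∑ x : ∀ i, Fin (r i),
                (-ψ x * Real.log (∏ k, Θ k (fun i => x i.1)) +
                  ∏ k, Θ k (fun i => x i.1)) -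
            (1 / ∏ i, (r i : ℝ)) *
              ∑ x : ∀ i, Fin (r i),
                (-ψ x * Real.log (∏ k, Θstar k (fun i => x i.1)) +
                  ∏ k, Θstar k (fun i => x i.1))) := by ring
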